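/- Let Σ ⊂ M×ℝ be the a-pitched twisting of a hypersurface Σ₀ ⊂ M by a one-parameter group of isometries Γ_s, i.e. Σ = {(Γ_s(p), as) : p ∈ Σ₀, s ∈ I}, with ν-function ν(α_p(s),as) = ⟨α_p'(s), η_s(α_p(s))⟩ where α_p(s) = Γ_s(p). Then the angle function of Σ is θ = ν/√(a²+ν²); in particular ∇ξ never vanishes on Σ, and ∇ξ is an asymptotic direction of Σ if and only if ∇ν is horizontal. Moreover 2θ² − 1 = (ν²−a²)/(ν²+a²), so the open set where |ν| > a is spacelike. -/

import Mathlib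

open scoped RealInnerProductSpace

/-- For the `a`-pitched twisting `Σ = {(Γ_s(p), as)}` of a hypersurface
`Σ₀ ⊂ M` (points `z` of `Σ` carrying the horizontal unit normal `ηs` of the
rotated hypersurface, the horizontal orbit velocity `αdot = α_p'(s)`, the
ν-function `ν = ⟨αdot, ηs⟩` and unit normal
`N = (a²+ν²)^{-1/2}(-aηs + ν∂t)`): the angle function is `θ = ν/√(a²+ν²)`,
`∇ξ` never vanishes, `∇ξ` is an asymptotic direction iff `∇ν` is horizontal,
and `2θ² - 1 = (ν²-a²)/(ν²+a²)`, so `Σ` is spacelike where `|ν| > a`. -/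
theorem stmt_14 {E : Type*} [NormedAddCommGroup E] [InnerProductSpace ℝ E] {S : Type*}
    (t : E) (ht : ‖t‖ = 1) (a : ℝ) (ha : 0 < a)
    (ηs αdot : S → E)
    (hηunit : ∀ z, ‖ηs z‖ = 1) (hηhor : ∀ z, ⟪ηs z, t⟫ = 0)
    (hαhor : ∀ z, ⟪αdot z, t⟫ = 0)
    (ν : S → ℝ) (hν : ∀ z, ν z = ⟪αdot z, ηs z⟫)
    (N : S → E)
    (hN : ∀ z, N z = (Real.sqrt (a ^ 2 + (ν z) ^ 2))⁻¹ • (-(a • ηs z) + ν z • t))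
    (θ : S → ℝ) (hθ : ∀ z, θ z = ⟪N z, t⟫)
    (gradXi gradθ gradν : S → E)
    (hgradXi : ∀ z, gradXi z = t - θ z • N z)
    (A : S → E →ₗ[ℝ] E)
    (hAθ : ∀ z, gradθ z = -(A z (gradXi z)))
    (hchain : ∀ z, gradθ z = (a ^ 2 * ((Real.sqrt (a ^ 2 + (ν z) ^ 2)) ^ 3)⁻¹) • gradν z)
    (hνtan : ∀ z, ⟪gradν z, N z⟫ = 0) :
    (∀ z, θ z = ν z / Real.sqrt (a ^ 2 + (ν z) ^ 2)) ∧
    (∀ z, gradXi z ≠ 0) ∧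
    ((∀ z, ⟪A z (gradXi z), gradXi z⟫ = 0) ↔ (∀ z, ⟪gradν z, t⟫ = 0)) ∧
    (∀ z, 2 * (θ z) ^ 2 - 1 = ((ν z) ^ 2 - a ^ 2) / ((ν z) ^ 2 + a ^ 2)) ∧
    (∀ z, a < |ν z| → 2 * (θ z) ^ 2 > 1) := by

  have hpos : ∀ z, (0:ℝ) < a ^ 2 + (ν z) ^ 2 := fun z => by positivity
  have hs : ∀ z, 0 < Real.sqrt (a ^ 2 + (ν z) ^ 2) := fun z =>
    Real.sqrt_pos.mpr (hpos z)
  have hsq : ∀ z, (Real.sqrt (a ^ 2 + (ν z) ^ 2)) ^ 2 = a ^ 2 + (ν z) ^ 2 := fun z =>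
    Real.sq_sqrt (hpos z).le
  have htt : ⟪t, t⟫ = 1 := by
    rw [real_inner_self_eq_norm_sq, ht]; norm_num
  have hθν : ∀ z, θ z = ν z / Real.sqrt (a ^ 2 + (ν z) ^ 2) := by
    intro z
    rw [hθ, hN]
    simp [inner_add_left, inner_smul_left, inner_neg_left, hηhor z, htt, ht, div_eq_inv_mul]
  have hθsq : ∀ z, (θ z) ^ 2 = (ν z) ^ 2 / (a ^ 2 + (ν z) ^ 2) := by
    intro z
    rw [hθν z, div_pow, hsq z]
  have h2θ : ∀ z, 2 * (θ z) ^ 2 - 1 = ((ν z) ^ 2 - a ^ 2) / ((ν z) ^ 2 + a ^ 2) := by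
    intro z
    rw [hθsq z]
    field_simp
    ring
  refine ⟨hθν, ?_, ?_, h2θ, ?_⟩
  · intro z hz
    have h1 : ⟪gradXi z, t⟫ = 1 - (θ z) ^ 2 := by
      rw [hgradXi, inner_sub_left, inner_smul_left, htt, ← hθ z]
      simp only [starRingEnd_apply, star_trivial]
      ring
    have h2 : (θ z) ^ 2 < 1 := by
      rw [hθsq z]
      rw [div_lt_one (hpos z)]
      nlinarith [sq_nonneg (ν z), ha]
    rw [hz] at h1
    simp at h1
    nlinarith
  · have key : ∀ z, ⟪A z (gradXi z), gradXi z⟫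
        = -(a ^ 2 * ((Real.sqrt (a ^ 2 + (ν z) ^ 2)) ^ 3)⁻¹) * ⟪gradν z, t⟫ := by
      intro z
      have hA : A z (gradXi z) = -gradθ z := by
        have := hAθ z
        rw [this]; simp
      rw [hA, hchain z, inner_neg_left, inner_smul_left]
      have : ⟪gradν z, gradXi z⟫ = ⟪gradν z, t⟫ := by
        rw [hgradXi, inner_sub_right, inner_smul_right, hνtan z]
        ring
      rw [this]
      simp only [starRingEnd_apply, star_trivial]
      ring
    have hcne : ∀ z, (a ^ 2 * ((Real.sqrt (a ^ 2 + (ν z) ^ 2)) ^ 3)⁻¹) ≠ 0 := by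
      intro z
      have := hs z
      positivity
    constructor
    · intro h z
      have := h z
      rw [key z] at this
      rcases mul_eq_zero.mp this with h' | h'
      · exact absurd (neg_eq_zero.mp h') (hcne z)
      · exact h'
    · intro h z
      rw [key z, h z, mul_zero]
  · intro z hz
    have h2 := h2θ z
    have hν2 : a ^ 2 < (ν z) ^ 2 := by
      have := abs_nonneg (ν z)
      nlinarith [sq_abs (ν z)]
    have : 0 < ((ν z) ^ 2 - a ^ 2) / ((ν z) ^ 2 + a ^ 2) := by
      apply div_pos <;> nlinarith
    linarith [h2]
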